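/- Let σ > 0, λ > 0, μ₁, μ₂ ∈ ℝ, and v₁ < v₂ be real numbers. Let γ be the Gaussian measure on ℝ with mean 0 and variance σ², and define g : ℝ → ℝ by g(z) = (v₁·e^{(v₁ z + μ₁)/λ} + v₂·e^{(v₂ z + μ₂)/λ}) / (e^{(v₁ z + μ₁)/λ} + e^{(v₂ z + μ₂)/λ}). Then for every v with v₁ < v < v₂, γ({z : g(z) ≤ v}) = Φ( (λ/(σ(v₁ − v₂)))·log((v₂ − v)/(v − v₁)) − (μ₁ − μ₂)/(σ(v₁ − v₂)) ), where Φ is the cumulative distribution function of the standard Gaussian measure on ℝ (mean 0, variance 1). -/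

import Mathlib

open MeasureTheory ProbabilityTheory

/-- CDF of the conditional expected payoff in the two-state case: with a
Gaussian signal `z ~ N(0, σ²)` and logit posterior, for `v₁ < v < v₂`,
`γ({z : g z ≤ v}) = Φ((λ/(σ(v₁−v₂)))·log((v₂−v)/(v−v₁)) − (μ₁−μ₂)/(σ(v₁−v₂)))`,
where `Φ` is the standard Gaussian CDF. -/
theorem stmt9 (σ lam μ₁ μ₂ v₁ v₂ : ℝ) (hσ : 0 < σ) (hlam : 0 < lam)
    (hv : v₁ < v₂) (v : ℝ) (hv₁ : v₁ < v) (hv₂ : v < v₂) :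
    ((gaussianReal 0 ⟨σ ^ 2, sq_nonneg σ⟩)
        {z : ℝ |
          (v₁ * Real.exp ((v₁ * z + μ₁) / lam) + v₂ * Real.exp ((v₂ * z + μ₂) / lam)) /
              (Real.exp ((v₁ * z + μ₁) / lam) + Real.exp ((v₂ * z + μ₂) / lam)) ≤ v}).toReal
      = ((gaussianReal 0 1)
          (Set.Iic (lam / (σ * (v₁ - v₂)) * Real.log ((v₂ - v) / (v - v₁))
            - (μ₁ - μ₂) / (σ * (v₁ - v₂))))).toReal := by
  set L : ℝ := Real.log ((v₂ - v) / (v - v₁)) with hL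
  set T : ℝ := lam / (σ * (v₁ - v₂)) * L - (μ₁ - μ₂) / (σ * (v₁ - v₂)) with hT
  have hσ0 : σ ≠ 0 := hσ.ne'
  have hd : v₁ - v₂ < 0 := by linarith
  have hd0 : v₁ - v₂ ≠ 0 := hd.ne
  have hset : {z : ℝ |
      (v₁ * Real.exp ((v₁ * z + μ₁) / lam) + v₂ * Real.exp ((v₂ * z + μ₂) / lam)) /
        (Real.exp ((v₁ * z + μ₁) / lam) + Real.exp ((v₂ * z + μ₂) / lam)) ≤ v}
      = Set.Iic (σ * T) := by
    ext z
    simp only [Set.mem_setOf_eq, Set.mem_Iic]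
    have ha : (0:ℝ) < Real.exp ((v₁ * z + μ₁) / lam) := Real.exp_pos _
    have hb : (0:ℝ) < Real.exp ((v₂ * z + μ₂) / lam) := Real.exp_pos _
    rw [div_le_iff₀ (by positivity)]
    have step1 : (v₁ * Real.exp ((v₁ * z + μ₁) / lam) + v₂ * Real.exp ((v₂ * z + μ₂) / lam)
        ≤ v * (Real.exp ((v₁ * z + μ₁) / lam) + Real.exp ((v₂ * z + μ₂) / lam)))
        ↔ (v₂ - v) * Real.exp ((v₂ * z + μ₂) / lam)
          ≤ (v - v₁) * Real.exp ((v₁ * z + μ₁) / lam) := by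
      constructor <;> intro h <;> nlinarith
    have step2 : ((v₂ - v) * Real.exp ((v₂ * z + μ₂) / lam)
        ≤ (v - v₁) * Real.exp ((v₁ * z + μ₁) / lam))
        ↔ L ≤ ((v₁ - v₂) * z + (μ₁ - μ₂)) / lam := by
      rw [← Real.log_le_log_iff (mul_pos (by linarith) hb) (mul_pos (by linarith) ha),
        Real.log_mul (by linarith) hb.ne', Real.log_mul (by linarith) ha.ne',
        Real.log_exp, Real.log_exp, hL, Real.log_div (by linarith) (by linarith)]
      have key : (v₁ * z + μ₁) / lam - (v₂ * z + μ₂) / lam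
          = ((v₁ - v₂) * z + (μ₁ - μ₂)) / lam := by
        rw [div_sub_div_same]; ring_nf
      constructor <;> intro h <;> linarith [key]
    rw [step1, step2, le_div_iff₀ hlam]
    have hσT : σ * T = (L * lam - (μ₁ - μ₂)) / (v₁ - v₂) := by
      rw [hT]; field_simp
    rw [hσT, le_div_iff_of_neg hd]
    constructor <;> intro h <;> nlinarith
  have hmap : (gaussianReal 0 ⟨σ ^ 2, sq_nonneg σ⟩ : Measure ℝ)
      = (gaussianReal 0 1).map (σ * ·) := by
    rw [gaussianReal_map_const_mul]
    congr 1
    · ring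
    · exact (mul_one _).symm
  rw [hset, hmap,
    Measure.map_apply (measurable_id'.const_mul σ) measurableSet_Iic]
  have hpre : (σ * ·) ⁻¹' Set.Iic (σ * T) = Set.Iic T := by
    ext x
    simp only [Set.mem_preimage, Set.mem_Iic]
    exact mul_le_mul_iff_right₀ hσ
  rw [hpre]
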